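/- A hypergraph H is S-connex if and only if it contains no S-path, where an S-path is a chordless path (x, z1, ..., zk, y) with k ≥ 1, x,y ∈ S, and z1,...,zk ∉ S. In particular, if variables a,b,c of an acyclic hypergraph form the pattern where a,b ∈ S are non-neighbors and c ∉ S is a neighbor of both, then H is not S-connex. -/

import Mathlib

/-- Two vertices are neighbors in a hypergraph if some hyperedge contains both. -/
def Nbr {V : Type*} (E : Finset (Finset V)) (x y : V) : Prop :=
  ∃ e ∈ E, x ∈ e ∧ y ∈ e

/-- Join tree: a tree on the hyperedges with the running intersection property. -/
def IsJoinTreeOf {V ι : Type*} (T : SimpleGraph ι) (lab : ι → Finset V)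
    (E : Finset (Finset V)) : Prop :=
  T.IsTree ∧ (∀ i, lab i ∈ E) ∧ (∀ e ∈ E, ∃ i, lab i = e) ∧
    ∀ v : V, (T.induce {i | v ∈ lab i}).Preconnected

/-- A hypergraph is acyclic if it admits a join tree. -/
def HGAcyclic {V : Type*} (E : Finset (Finset V)) : Prop :=
  ∃ (ι : Type) (T : SimpleGraph ι) (lab : ι → Finset V), IsJoinTreeOf T lab E

/-- A hypergraph `E` is `S`-connex: there is a join tree of an inclusive
extension of `E` with a connected subtree whose labels cover exactly `S`. -/
def SConnex {V : Type*} (E : Finset (Finset V)) (S : Finset V) : Prop :=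
  ∃ (ι : Type) (T : SimpleGraph ι) (lab : ι → Finset V),
    T.IsTree ∧ (∀ e ∈ E, ∃ i, lab i = e) ∧ (∀ i, ∃ e ∈ E, lab i ⊆ e) ∧
    (∀ v : V, (T.induce {i | v ∈ lab i}).Preconnected) ∧
    ∃ Sub : Set ι, (T.induce Sub).Preconnected ∧
      ∀ v : V, v ∈ S ↔ ∃ i ∈ Sub, v ∈ lab i

/-- A chordless path, as a list of vertices: no repeats, consecutive vertices are
neighbors, and no two non-consecutive vertices are neighbors. -/
def ChordlessList {V : Type*} (E : Finset (Finset V)) (p : List V) : Prop :=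
  p.Nodup ∧ p.Chain' (Nbr E) ∧
    ∀ i j : ℕ, i + 1 < j → ∀ a ∈ p[i]?, ∀ b ∈ p[j]?, ¬ Nbr E a b

/-- An `S`-path: a chordless path `(x, z₁, …, z_k, y)` with `k ≥ 1`,
`x, y ∈ S` and `z₁, …, z_k ∉ S`. -/
def IsSPath {V : Type*} (E : Finset (Finset V)) (S : Finset V)
    (x : V) (zs : List V) (y : V) : Prop :=
  zs ≠ [] ∧ x ∈ S ∧ y ∈ S ∧ (∀ z ∈ zs, z ∉ S) ∧
    ChordlessList E (x :: zs ++ [y])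

open scoped Classical

section Toolkit
open SimpleGraph
variable {ι : Type*} {T : SimpleGraph ι}

/-- Connectivity within a set, via walks staying in the set. -/
def SubConn (T : SimpleGraph ι) (X : Set ι) : Prop :=
  ∀ u ∈ X, ∀ v ∈ X, ∃ w : T.Walk u v, ∀ x ∈ w.support, x ∈ X

lemma liftWalk {X : Set ι} {u v : ι} (w : T.Walk u v) (hw : ∀ x ∈ w.support, x ∈ X)
    (hu : u ∈ X) (hv : v ∈ X) : (T.induce X).Reachable ⟨u, hu⟩ ⟨v, hv⟩ := by
  induction w with
  | nil => rfl
  | @cons a b c h p ih =>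
      have hb : b ∈ X := hw b (by simp)
      have h1 : (T.induce X).Adj ⟨a, hu⟩ ⟨b, hb⟩ := h
      exact h1.reachable.trans (ih (fun x hx => hw x (by simp [hx])) hb hv)

lemma projWalk {X : Set ι} {a b : X} (w : (T.induce X).Walk a b) :
    ∃ w' : T.Walk a.1 b.1, ∀ x ∈ w'.support, x ∈ X := by
  refine ⟨w.map (SimpleGraph.Embedding.induce X).toHom, ?_⟩
  intro x hx
  erw [SimpleGraph.Walk.support_map] at hx
  obtain ⟨s, _, rfl⟩ := List.mem_map.mp hx
  exact s.2

lemma subConn_of_preconnected {X : Set ι} (h : (T.induce X).Preconnected) : SubConn T X := by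
  intro u hu v hv
  obtain ⟨w⟩ := h ⟨u, hu⟩ ⟨v, hv⟩
  exact projWalk w

lemma preconnected_of_subConn {X : Set ι} (h : SubConn T X) : (T.induce X).Preconnected := by
  rintro ⟨u, hu⟩ ⟨v, hv⟩
  obtain ⟨w, hw⟩ := h u hu v hv
  exact liftWalk w hw hu hv

lemma pathInSub (hT : T.IsAcyclic) {X : Set ι} (hX : SubConn T X) {u v : ι}
    (hu : u ∈ X) (hv : v ∈ X) (p : T.Walk u v) (hp : p.IsPath) : ∀ x ∈ p.support, x ∈ X := by
  obtain ⟨w, hw⟩ := hX u hu v hv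
  have : (⟨p, hp⟩ : T.Path u v) = w.toPath := hT.path_unique _ _
  have hps : p = w.bypass := congrArg Subtype.val this
  intro x hx
  rw [hps] at hx
  exact hw x (w.support_bypass_subset hx)

lemma subConnInter (hT : T.IsAcyclic) {A B : Set ι} (hA : SubConn T A) (hB : SubConn T B) :
    SubConn T (A ∩ B) := by
  intro u hu v hv
  obtain ⟨w, hw⟩ := hA u hu.1 v hv.1
  refine ⟨w.bypass, fun x hx => ⟨hw x (w.support_bypass_subset hx), ?_⟩⟩
  exact pathInSub hT hB hu.2 hv.2 w.bypass w.bypass_isPath x hx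

lemma firstHit {X : Set ι} {u v : ι} (w : T.Walk u v) (hv : v ∈ X) :
    ∃ x, x ∈ X ∧ ∃ (w₁ : T.Walk u x) (w₂ : T.Walk x v), w = w₁.append w₂ ∧
      (∀ z ∈ w₁.support, z ∈ X → z = x) := by
  induction w with
  | @nil a =>
      exact ⟨a, hv, SimpleGraph.Walk.nil, SimpleGraph.Walk.nil, rfl, by simp⟩
  | @cons a b c h p ih =>
      by_cases ha : a ∈ X
      · exact ⟨a, ha, SimpleGraph.Walk.nil, SimpleGraph.Walk.cons h p, rfl, by simp⟩
      · obtain ⟨x, hx, w₁, w₂, heq, hlast⟩ := ih hv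
        refine ⟨x, hx, SimpleGraph.Walk.cons h w₁, w₂, by rw [SimpleGraph.Walk.cons_append, heq], ?_⟩
        intro z hz hzX
        rcases (by simpa using hz : z = a ∨ z ∈ w₁.support) with rfl | hz'
        · exact absurd hzX ha
        · exact hlast z hz' hzX

lemma median (hT : T.IsAcyclic) {a b c : ι} (pab : T.Walk a b) (pac : T.Walk a c)
    (pbc : T.Walk b c) (h1 : pab.IsPath) (h2 : pac.IsPath) (h3 : pbc.IsPath) :
    ∃ m, m ∈ pab.support ∧ m ∈ pac.support ∧ m ∈ pbc.support := by
  obtain ⟨x, hx, w₁, w₂, heq, hlast⟩ :=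
    firstHit (X := {z | z ∈ pac.support}) pab.reverse (by simp)
  have hxac : x ∈ pac.support := hx
  have hxab : x ∈ pab.support := by
    have : x ∈ pab.reverse.support := by
      rw [heq]
      exact SimpleGraph.Walk.subset_support_append_left _ _ w₁.end_mem_support
    simpa [SimpleGraph.Walk.support_reverse] using this
  have hw₁path : w₁.IsPath := by
    have h : (w₁.append w₂).IsPath := by rw [← heq]; exact h1.reverse
    exact h.of_append_left
  have hdpath : (pac.dropUntil x hxac).IsPath := h2.dropUntil hxac
  have hdcons : (pac.dropUntil x hxac).support = x :: (pac.dropUntil x hxac).support.tail :=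
    SimpleGraph.Walk.support_eq_cons _
  have hxtail : x ∉ (pac.dropUntil x hxac).support.tail := by
    have := hdpath.support_nodup
    rw [hdcons] at this
    exact (List.nodup_cons.mp this).1
  set s : T.Walk b c := w₁.append (pac.dropUntil x hxac) with hs
  have hspath : s.IsPath := by
    rw [SimpleGraph.Walk.isPath_def, SimpleGraph.Walk.support_append, List.nodup_append]
    refine ⟨hw₁path.support_nodup, ?_, ?_⟩
    · have := hdpath.support_nodup
      rw [hdcons] at this
      exact (List.nodup_cons.mp this).2
    · intro z hz1 z₂ hz2 hzz
      subst hzz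
      have hzX : z ∈ pac.support := by
        have : z ∈ (pac.dropUntil x hxac).support := by
          rw [hdcons]; exact List.mem_cons_of_mem _ hz2
        exact SimpleGraph.Walk.support_dropUntil_subset _ _ this
      have : z = x := hlast z hz1 hzX
      exact hxtail (this ▸ hz2)
  have hpbc : pbc = s := congrArg Subtype.val (hT.path_unique ⟨pbc, h3⟩ ⟨s, hspath⟩)
  refine ⟨x, hxab, hxac, ?_⟩
  rw [hpbc]
  exact SimpleGraph.Walk.subset_support_append_left _ _ w₁.end_mem_support

noncomputable def walkOf (hc : T.Connected) (u v : ι) : T.Walk u v :=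
  Classical.choice (hc u v)

lemma helly3 (hT : T.IsTree) {A B C : Set ι} (hA : SubConn T A) (hB : SubConn T B)
    (hC : SubConn T C) {a b c : ι} (ha : a ∈ B ∩ C) (hb : b ∈ A ∩ C) (hc : c ∈ A ∩ B) :
    ∃ m, m ∈ A ∧ m ∈ B ∧ m ∈ C := by
  have hconn := hT.isConnected
  obtain ⟨m, h1, h2, h3⟩ := median hT.IsAcyclic (walkOf hconn a b).bypass
    (walkOf hconn a c).bypass (walkOf hconn b c).bypass
    (SimpleGraph.Walk.bypass_isPath _) (SimpleGraph.Walk.bypass_isPath _)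
    (SimpleGraph.Walk.bypass_isPath _)
  exact ⟨m, pathInSub hT.IsAcyclic hA hb.1 hc.1 _ (SimpleGraph.Walk.bypass_isPath _) m h3,
    pathInSub hT.IsAcyclic hB ha.1 hc.2 _ (SimpleGraph.Walk.bypass_isPath _) m h2,
    pathInSub hT.IsAcyclic hC ha.2 hb.2 _ (SimpleGraph.Walk.bypass_isPath _) m h1⟩

lemma helly (hT : T.IsTree) {β : Type*} (K : Finset β) (A : β → Set ι)
    (hne : K.Nonempty) (hconn : ∀ v ∈ K, SubConn T (A v))
    (hpair : ∀ v ∈ K, ∀ w ∈ K, (A v ∩ A w).Nonempty) :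
    ∃ i, ∀ v ∈ K, i ∈ A v := by
  classical
  induction K using Finset.cons_induction generalizing A with
  | empty => exact absurd hne (by simp)
  | cons x s hx ih =>
      rcases s.eq_empty_or_nonempty with rfl | hs
      · obtain ⟨i, hi⟩ := hpair x (by simp) x (by simp)
        exact ⟨i, by simpa using hi.1⟩
      · obtain ⟨i, hi⟩ := ih (fun v => A v ∩ A x) hs
          (fun v hv => subConnInter hT.IsAcyclic (hconn v (by simp [hv])) (hconn x (by simp)))
          (fun v hv w hw => by
            obtain ⟨a, ha⟩ := hpair w (by simp [hw]) x (by simp)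
            obtain ⟨b, hb⟩ := hpair v (by simp [hv]) x (by simp)
            obtain ⟨c, hc⟩ := hpair v (by simp [hv]) w (by simp [hw])
            obtain ⟨m, h1, h2, h3⟩ := helly3 hT (hconn v (by simp [hv]))
              (hconn w (by simp [hw])) (hconn x (by simp)) ha hb hc
            exact ⟨m, ⟨h1, h3⟩, ⟨h2, h3⟩⟩)
      -- i is in all A v ∩ A x for v ∈ s
        obtain ⟨v₀, hv₀⟩ := hs
        refine ⟨i, fun v hv => ?_⟩
        rcases Finset.mem_cons.mp hv with rfl | hvs
        · exact (hi v₀ hv₀).2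
        · exact (hi v hvs).1

lemma crossing {X : Set ι} : ∀ {u v : ι} (w : T.Walk u v), u ∈ X → v ∉ X →
    ∃ a b, T.Adj a b ∧ a ∈ X ∧ b ∉ X ∧ a ∈ w.support ∧ b ∈ w.support := by
  intro u v w
  induction w with
  | nil => intro hu hv; exact absurd hu hv
  | @cons a m c h p ih =>
      intro hu hv
      by_cases hm : m ∈ X
      · obtain ⟨x, y, h1, h2, h3, h4, h5⟩ := ih hm hv
        exact ⟨x, y, h1, h2, h3, by simp [h4], by simp [h5]⟩
      · exact ⟨a, m, h, hu, hm, by simp, by simp⟩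
end Toolkit
section Forward
open SimpleGraph
variable {V : Type*} {ι : Type*} {T : SimpleGraph ι}

lemma zsWalk {E : Finset (Finset V)} {lab : ι → Finset V}
    (hnode : ∀ e ∈ E, ∃ i, lab i = e)
    (hA : ∀ v : V, SubConn T {i | v ∈ lab i}) (y : V) :
    ∀ (rest : List V) (z : V), List.Chain' (Nbr E) (z :: (rest ++ [y])) →
      ∀ M : ι, z ∈ lab M →
      ∃ N, y ∈ lab N ∧ ∃ w : T.Walk M N, ∀ i ∈ w.support, ∃ t ∈ z :: rest, t ∈ lab i := by
  intro rest
  induction rest with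
  | nil =>
      intro z hch M hzM
      have hnb : Nbr E z y := (List.isChain_cons_cons.mp hch).1
      obtain ⟨e, he, hze, hye⟩ := hnb
      obtain ⟨N, hN⟩ := hnode e he
      obtain ⟨w, hw⟩ := hA z M (by exact hzM) N (by simp [hN, hze])
      exact ⟨N, by simp [hN, hye], w, fun i hi => ⟨z, by simp, hw i hi⟩⟩
  | cons z' rest' ih =>
      intro z hch M hzM
      have hch' : List.Chain' (Nbr E) (z' :: (rest' ++ [y])) := (List.isChain_cons_cons.mp hch).2
      have hnb : Nbr E z z' := (List.isChain_cons_cons.mp hch).1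
      obtain ⟨e, he, hze, hz'e⟩ := hnb
      obtain ⟨M', hM'⟩ := hnode e he
      obtain ⟨w₁, hw₁⟩ := hA z M (by exact hzM) M' (by simp [hM', hze])
      obtain ⟨N, hyN, w₂, hw₂⟩ := ih z' hch' M' (by simp [hM', hz'e])
      refine ⟨N, hyN, w₁.append w₂, fun i hi => ?_⟩
      rcases (SimpleGraph.Walk.mem_support_append_iff _ _).mp hi with h | h
      · exact ⟨z, by simp, hw₁ i h⟩
      · obtain ⟨t, ht, hti⟩ := hw₂ i h
        exact ⟨t, by simpa using Or.inr (by simpa using ht), hti⟩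

lemma forward {E : Finset (Finset V)} {S : Finset V}
    (hSvar : ∀ v ∈ S, ∃ e ∈ E, v ∈ e) (hsc : SConnex E S)
    {x y : V} {zs : List V} (hsp : IsSPath E S x zs y) : False := by
  obtain ⟨ι, T, lab, hTree, hnode, hsubedge, hri, Sub, hSubpre, hcov⟩ := hsc
  obtain ⟨hzs, hxS, hyS, hzsS, hnodup, hchain, hchord⟩ := hsp
  set A : V → Set ι := fun v => {i | v ∈ lab i} with hAdef
  have hA : ∀ v, SubConn T (A v) := fun v => subConn_of_preconnected (hri v)
  have hSub : SubConn T Sub := subConn_of_preconnected hSubpre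
  have hSubS : ∀ i ∈ Sub, ∀ v ∈ lab i, v ∈ S := fun i hi v hv => (hcov v).mpr ⟨i, hi, hv⟩
  have hlen : 1 ≤ zs.length := List.length_pos_iff.mpr hzs
  -- no chord between x and y
  have hNbrXY : ¬ Nbr E x y := by
    have h0 : (x :: zs ++ [y])[0]? = some x := by simp
    have hL : (x :: zs ++ [y])[zs.length + 1]? = some y := by
      have : (x :: zs ++ [y]) = (x :: zs) ++ [y] := by simp
      rw [this]
      have : (x :: zs).length = zs.length + 1 := by simp
      rw [← this]
      exact List.getElem?_concat_length
    exact hchord 0 (zs.length + 1) (by omega) x h0 y hL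
  -- disjointness of A x and A y
  have hdisj : ∀ i, i ∈ A x → i ∈ A y → False := by
    intro i hix hiy
    obtain ⟨e, he, hle⟩ := hsubedge i
    exact hNbrXY ⟨e, he, hle hix, hle hiy⟩
  obtain ⟨A0, hA0Sub, hA0x⟩ := (hcov x).mp hxS
  obtain ⟨B0, hB0Sub, hB0y⟩ := (hcov y).mp hyS
  obtain ⟨z, rest, rfl⟩ := List.exists_cons_of_ne_nil hzs
  have hch1 : List.Chain' (Nbr E) (x :: (z :: (rest ++ [y]))) := by
    simpa using hchain
  have hnbxz : Nbr E x z := (List.isChain_cons_cons.mp hch1).1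
  obtain ⟨e₀, he₀, hxe₀, hze₀⟩ := hnbxz
  obtain ⟨M₀, hM₀⟩ := hnode e₀ he₀
  obtain ⟨N, hyN, w₂, hw₂⟩ := zsWalk hnode hA y rest z (List.isChain_cons_cons.mp hch1).2 M₀
    (by simp [hM₀, hze₀])
  obtain ⟨w₁, hw₁⟩ := hA x A0 hA0x M₀ (by simp [hAdef, hM₀, hxe₀])
  obtain ⟨w₃, hw₃⟩ := hA y N hyN B0 hB0y
  set W := w₁.append (w₂.append w₃) with hW
  have hWsup : ∀ i ∈ W.support, i ∈ A x ∨ (∃ t ∈ z :: rest, t ∈ lab i) ∨ i ∈ A y := by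
    intro i hi
    rcases (SimpleGraph.Walk.mem_support_append_iff _ _).mp hi with h | h
    · exact Or.inl (hw₁ i h)
    · rcases (SimpleGraph.Walk.mem_support_append_iff _ _).mp h with h' | h'
      · exact Or.inr (Or.inl (hw₂ i h'))
      · exact Or.inr (Or.inr (hw₃ i h'))
  set P := W.bypass with hP
  have hPSub : ∀ i ∈ P.support, i ∈ Sub :=
    pathInSub hTree.IsAcyclic hSub hA0Sub hB0Sub P (SimpleGraph.Walk.bypass_isPath _)
  have hPxy : ∀ i ∈ P.support, i ∈ A x ∨ i ∈ A y := by
    intro i hi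
    rcases hWsup i (W.support_bypass_subset hi) with h | h | h
    · exact Or.inl h
    · obtain ⟨t, ht, hti⟩ := h
      have htS : t ∈ S := hSubS i (hPSub i hi) t hti
      exact absurd htS (hzsS t (by simpa using ht))
    · exact Or.inr h
  have hB0nAx : B0 ∉ A x := fun h => hdisj B0 h hB0y
  obtain ⟨u, b, hadj, huAx, hbnAx, huP, hbP⟩ := crossing P hA0x hB0nAx
  have hbAy : b ∈ A y := (hPxy b hbP).resolve_left hbnAx
  have hunAy : u ∉ A y := fun h => hdisj u huAx h
  -- second path from M₀ to N through u,b
  obtain ⟨wA, hwA⟩ := hA x M₀ (by simp [hAdef, hM₀, hxe₀]) u huAx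
  obtain ⟨wB, hwB⟩ := hA y b hbAy N hyN
  set pA := wA.bypass with hpA
  set pB := wB.bypass with hpB
  have hpAsup : ∀ i ∈ pA.support, i ∈ A x := fun i hi => hwA i (wA.support_bypass_subset hi)
  have hpBsup : ∀ i ∈ pB.support, i ∈ A y := fun i hi => hwB i (wB.support_bypass_subset hi)
  set R := pA.append (SimpleGraph.Walk.cons hadj pB) with hR
  have hRpath : R.IsPath := by
    rw [SimpleGraph.Walk.isPath_def, SimpleGraph.Walk.support_append]
    have htail : (SimpleGraph.Walk.cons hadj pB).support.tail = pB.support := by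
      simp [SimpleGraph.Walk.support_cons]
    rw [htail, List.nodup_append]
    refine ⟨(SimpleGraph.Walk.bypass_isPath wA).support_nodup,
      (SimpleGraph.Walk.bypass_isPath wB).support_nodup, ?_⟩
    intro i hi1 i₂ hi2 hii
    subst hii
    exact hdisj i (hpAsup i hi1) (hpBsup i hi2)
  have hQR : w₂.bypass = R :=
    congrArg Subtype.val (hTree.IsAcyclic.path_unique
      ⟨w₂.bypass, SimpleGraph.Walk.bypass_isPath _⟩ ⟨R, hRpath⟩)
  have huQ : u ∈ w₂.bypass.support := by
    rw [hQR, hR]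
    exact SimpleGraph.Walk.subset_support_append_left _ _ pA.end_mem_support
  obtain ⟨t, ht, htu⟩ := hw₂ u (w₂.support_bypass_subset huQ)
  have htS : t ∈ S := hSubS u (hPSub u huP) t htu
  exact hzsS t (by simpa using ht) htS
end Forward
section Shortcut
variable {V : Type*} {E : Finset (Finset V)} {S : Finset V}

lemma splice (v v' : V) (zs : List V) (hzs : zs ≠ [])
    (hch : List.Chain' (Nbr E) (v :: zs ++ [v']))
    (i j : ℕ) (hij : i + 1 < j) (hjlen : j < zs.length + 2)
    (x y : V) (hx : (v :: zs ++ [v'])[i]? = some x) (hy : (v :: zs ++ [v'])[j]? = some y)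
    (hnb : Nbr E x y) (hnotboth : ¬(i = 0 ∧ j = zs.length + 1)) :
    ∃ zs' : List V, zs'.length < zs.length ∧ zs' ≠ [] ∧ (∀ z ∈ zs', z ∈ zs) ∧
      List.Chain' (Nbr E) (v :: zs' ++ [v']) := by
  have hilen : i ≤ zs.length := by omega
  have hj1 : j - 1 ≤ zs.length := by omega
  set L := v :: zs ++ [v'] with hLdef
  have hLr : L = (v :: zs) ++ [v'] := by simp [hLdef]
  have hLr2 : L = v :: (zs ++ [v']) := by simp [hLdef]
  refine ⟨zs.take i ++ zs.drop (j-1), ?_, ?_, ?_, ?_⟩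
  · rw [List.length_append, List.length_take, List.length_drop]
    omega
  · have : (zs.take i ++ zs.drop (j-1)).length = i + (zs.length - (j-1)) := by
      rw [List.length_append, List.length_take, List.length_drop]; omega
    intro hcon
    rw [hcon] at this
    simp at this
    omega
  · intro z hz
    rcases List.mem_append.mp hz with h | h
    · exact List.mem_of_mem_take h
    · exact List.mem_of_mem_drop h
  · have hgoal : (v :: (zs.take i ++ zs.drop (j-1)) ++ [v'])
        = (v :: zs.take i) ++ (zs.drop (j-1) ++ [v']) := by simp
    rw [hgoal]
    have htake : L.take (i+1) = v :: zs.take i := by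
      rw [hLr, List.take_append_of_le_length (by simp; omega)]
      simp [List.take_succ_cons]
    have hdrop : L.drop j = zs.drop (j-1) ++ [v'] := by
      rw [hLr2]
      have hjj : j = (j-1) + 1 := by omega
      conv_lhs => rw [hjj]
      rw [List.drop_succ_cons, List.drop_append_of_le_length hj1]
    show List.IsChain _ _; rw [List.isChain_append]
    refine ⟨by rw [← htake]; exact hch.take _, by rw [← hdrop]; exact hch.drop _, ?_⟩
    intro a ha b hb
    have hga : a = x := by
      have : L.take (i+1) = L.take i ++ [x] := by
        rw [List.take_succ, hx]; rfl
      rw [← htake, this, List.getLast?_concat] at ha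
      exact (Option.some_inj.mp ha).symm
    have hgb : b = y := by
      rw [← hdrop, List.head?_drop] at hb
      have : L[j]? = some y := hy
      rw [this] at hb
      exact (Option.some_inj.mp hb).symm
    rw [hga, hgb]
    exact hnb

lemma shortcut (hSvar : ∀ w ∈ S, ∃ e ∈ E, w ∈ e)
    (noSP : ¬ ∃ (x : V) (zs : List V) (y : V), IsSPath E S x zs y)
    (v v' : V) (hv : v ∈ S) (hv' : v' ∈ S) :
    ∀ (n : ℕ) (zs : List V), zs.length = n → zs ≠ [] → (∀ z ∈ zs, z ∉ S) →
      List.Chain' (Nbr E) (v :: zs ++ [v']) → Nbr E v v' := by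
  intro n
  induction n using Nat.strong_induction_on with
  | _ n IH =>
  intro zs hlen hne hzsS hch
  by_contra hnn
  set L := v :: zs ++ [v'] with hLdef
  have hLlen : L.length = zs.length + 2 := by simp [hLdef]
  have hzslen : 1 ≤ zs.length := List.length_pos_iff.mpr hne
  have hL0 : L[0]? = some v := by simp [hLdef]
  have hLlast : L[zs.length+1]? = some v' := by
    have h1 : L = (v :: zs) ++ [v'] := by simp [hLdef]
    have h2 : (v :: zs).length = zs.length + 1 := by simp
    rw [h1, ← h2]
    exact List.getElem?_concat_length
  have hInterior : ∀ (t : ℕ), 0 < t → t < zs.length + 1 → ∀ x, L[t]? = some x → x ∈ zs := by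
    intro t h1 h2 x hx
    have hLr2 : L = v :: (zs ++ [v']) := by simp [hLdef]
    rw [hLr2] at hx
    have ht : t = (t-1) + 1 := by omega
    rw [ht, List.getElem?_cons_succ] at hx
    rw [List.getElem?_append_left (by omega)] at hx
    exact List.mem_of_getElem? hx
  by_cases hcd : ∃ i j x y, i + 1 < j ∧ L[i]? = some x ∧ L[j]? = some y ∧ Nbr E x y
  · obtain ⟨i, j, x, y, hij, hx, hy, hnb⟩ := hcd
    have hjlen : j < zs.length + 2 := by
      obtain ⟨hj, -⟩ := List.getElem?_eq_some_iff.mp hy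
      omega
    by_cases hb : i = 0 ∧ j = zs.length + 1
    · obtain ⟨rfl, rfl⟩ := hb
      rw [hL0] at hx
      rw [hLlast] at hy
      obtain rfl := Option.some_inj.mp hx
      obtain rfl := Option.some_inj.mp hy
      exact hnn hnb
    · obtain ⟨zs', h1, h2, h3, h4⟩ := splice v v' zs hne hch i j hij hjlen x y hx hy hnb hb
      exact hnn (IH zs'.length (by omega) zs' rfl h2 (fun z hz => hzsS z (h3 z hz)) h4)
  · by_cases hd : L.Nodup
    · exact noSP ⟨v, zs, v', hne, hv, hv', hzsS, hd, hch,
        fun i j hij a ha b hb hnb => hcd ⟨i, j, a, b, hij, ha, hb, hnb⟩⟩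
    · rw [List.nodup_iff_injective_get] at hd
      simp only [Function.Injective] at hd
      push_neg at hd
      obtain ⟨i0, j0, hget, hne0⟩ := hd
      -- wlog i < j
      obtain ⟨i, j, hij, hgeq⟩ : ∃ i j : Fin L.length, i.val < j.val ∧ L.get i = L.get j := by
        rcases lt_or_gt_of_ne (fun h => hne0 (Fin.ext h) : i0.val ≠ j0.val) with h | h
        · exact ⟨i0, j0, h, hget⟩
        · exact ⟨j0, i0, h, hget.symm⟩
      have hjL : j.val < zs.length + 2 := by rw [← hLlen]; exact j.isLt
      have hgi : L[i.val]? = some (L.get i) := by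
        rw [List.getElem?_eq_getElem i.isLt]; simp
      have hgj : L[j.val]? = some (L.get j) := by
        rw [List.getElem?_eq_getElem j.isLt]; simp
      by_cases hjlast : j.val = zs.length + 1
      · by_cases hi0 : i.val = 0
        · -- v = v'
          have hveq : L.get i = v := by
            rw [hi0] at hgi
            rw [hgi] at hL0
            exact Option.some_inj.mp hL0
          have hv'eq : L.get j = v' := by
            rw [hjlast] at hgj
            rw [hgj] at hLlast
            exact Option.some_inj.mp hLlast
          have hvv' : v = v' := by rw [← hveq, hgeq, hv'eq]
          obtain ⟨e, he, hve⟩ := hSvar v hv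
          exact hnn (hvv' ▸ ⟨e, he, hve, hve⟩)
        · -- L.get i interior = v' ∈ S, contra
          have hmem : L.get i ∈ zs := hInterior i.val (by omega) (by omega) _ hgi
          have hjv' : L.get j = v' := by
            rw [hjlast] at hgj
            rw [hgj] at hLlast
            exact Option.some_inj.mp hLlast
          have heq2 : L.get i = v' := hgeq.trans hjv'
          exact hzsS _ hmem (heq2 ▸ hv')
      · by_cases hi0 : i.val = 0
        · have hmem : L.get j ∈ zs := hInterior j.val (by omega) (by omega) _ hgj
          have hiv : L.get i = v := by
            rw [hi0] at hgi
            rw [hgi] at hL0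
            exact Option.some_inj.mp hL0
          have heq2 : L.get j = v := hgeq.symm.trans hiv
          exact hzsS _ hmem (heq2 ▸ hv)
        · -- splice at (i, j+1)
          have hj1 : j.val + 1 < L.length := by omega
          have hy' : L[j.val + 1]? = some (L.get ⟨j.val+1, hj1⟩) := by
            rw [List.getElem?_eq_getElem hj1]; simp
          have hnb : Nbr E (L.get i) (L.get ⟨j.val+1, hj1⟩) := by
            have := List.isChain_iff_getElem.mp hch j.val (by have h := hLlen; have h2 := j.isLt; omega)
            rw [hgeq]
            exact this
          obtain ⟨zs', h1, h2, h3, h4⟩ := splice v v' zs hne hch i.val (j.val+1)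
            (by omega) (by omega) _ _ hgi hy' hnb (by omega)
          exact hnn (IH zs'.length (by omega) zs' rfl h2 (fun z hz => hzsS z (h3 z hz)) h4)
end Shortcut
section Glue
open SimpleGraph
variable {ι₀ : Type*} {K : Type*}

/-- Gluing a "hat" copy of a tree with `K`-indexed "body" copies, each body
attached to the hat copy at its attach point. -/
def Glue (T₀ : SimpleGraph ι₀) (att : K → ι₀) : SimpleGraph (ι₀ ⊕ K × ι₀) where
  Adj x y := match x, y with
    | .inl i, .inl j => T₀.Adj i j
    | .inr (k, i), .inr (l, j) => k = l ∧ T₀.Adj i j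
    | .inl i, .inr (k, j) => i = att k ∧ j = att k
    | .inr (k, j), .inl i => i = att k ∧ j = att k
  symm := ⟨by
    rintro (i | ⟨k, i⟩) (j | ⟨l, j⟩) h
    · exact h.symm
    · exact h
    · exact h
    · exact ⟨h.1.symm, h.2.symm⟩⟩
  loopless := ⟨by
    rintro (i | ⟨k, i⟩) h
    · exact T₀.loopless.irrefl i h
    · exact T₀.loopless.irrefl i h.2⟩

variable {T₀ : SimpleGraph ι₀} {att : K → ι₀}

def hatHom (T₀ : SimpleGraph ι₀) (att : K → ι₀) : T₀ →g Glue T₀ att :=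
  ⟨Sum.inl, fun h => h⟩

def bodyHom (T₀ : SimpleGraph ι₀) (att : K → ι₀) (k : K) : T₀ →g Glue T₀ att :=
  ⟨fun i => Sum.inr (k, i), fun h => ⟨rfl, h⟩⟩

lemma glue_cross_adj (k : K) : (Glue T₀ att).Adj (Sum.inl (att k)) (Sum.inr (k, att k)) :=
  ⟨rfl, rfl⟩

lemma glue_connected (hc : T₀.Connected) : (Glue T₀ att).Connected := by
  have hne : Nonempty ι₀ := hc.nonempty
  obtain ⟨i₀⟩ := hne
  have hhat : ∀ i : ι₀, (Glue T₀ att).Reachable (Sum.inl i) (Sum.inl i₀) := fun i =>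
    SimpleGraph.Walk.reachable ((walkOf hc i i₀).map (hatHom T₀ att))
  have hbody : ∀ (k : K) (i : ι₀), (Glue T₀ att).Reachable (Sum.inr (k, i)) (Sum.inl i₀) := by
    intro k i
    have h1 : (Glue T₀ att).Reachable (Sum.inr (k, i)) (Sum.inr (k, att k)) :=
      SimpleGraph.Walk.reachable ((walkOf hc i (att k)).map (bodyHom T₀ att k))
    exact h1.trans ((glue_cross_adj k).symm.reachable.trans (hhat (att k)))
  rw [SimpleGraph.connected_iff]
  refine ⟨?_, ⟨Sum.inl i₀⟩⟩
  rintro (i | ⟨k, i⟩) (j | ⟨l, j⟩)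
  · exact (hhat i).trans (hhat j).symm
  · exact (hhat i).trans (hbody l j).symm
  · exact (hbody k i).trans (hhat j).symm
  · exact (hbody k i).trans (hbody l j).symm

/-- The part of a glued vertex. -/
def gluePt : ι₀ ⊕ K × ι₀ → Option K
  | .inl _ => none
  | .inr (k, _) => some k

lemma glue_cross_mem {x y : ι₀ ⊕ K × ι₀} (w : (Glue T₀ att).Walk x y) (k : K)
    (hx : gluePt x = some k) (hy : gluePt y ≠ some k) :
    s(Sum.inl (att k), Sum.inr (k, att k)) ∈ w.edges := by
  induction w with
  | nil => exact absurd hx hy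
  | @cons a m c h p ih =>
      rw [SimpleGraph.Walk.edges_cons]
      by_cases hm : gluePt m = some k
      · exact List.mem_cons_of_mem _ (ih hm hy)
      · refine List.mem_cons.mpr (Or.inl ?_)
        obtain ⟨k', i, rfl⟩ : ∃ k' i, a = Sum.inr (k', i) := by
          cases a with
          | inl i => exact absurd hx (by simp [gluePt])
          | inr q => exact ⟨q.1, q.2, by rfl⟩
        have hk' : k' = k := by simpa [gluePt] using hx
        rw [← hk']
        cases m with
        | inl j =>
            obtain ⟨h1, h2⟩ := (h : j = att k' ∧ i = att k')
            subst h1; subst h2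
            rw [Sym2.eq_swap]
        | inr q =>
            obtain ⟨h1, h2⟩ := (h : k' = q.1 ∧ T₀.Adj i q.2)
            exact absurd (by simp [gluePt, ← h1, hk']) hm

lemma glue_proj (f : ι₀ → ι₀ ⊕ K × ι₀)
    (hadj : ∀ a b, (Glue T₀ att).Adj (f a) (f b) → T₀.Adj a b)
    {x y : ι₀ ⊕ K × ι₀} (w : (Glue T₀ att).Walk x y)
    (hs : ∀ z ∈ w.support, ∃ a, z = f a) :
    ∃ (a b : ι₀) (_ : x = f a) (_ : y = f b) (w₀ : T₀.Walk a b),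
      w.support = w₀.support.map f ∧ w.edges = w₀.edges.map (Sym2.map f) ∧
      w.length = w₀.length := by
  induction w with
  | @nil z =>
      obtain ⟨a, rfl⟩ := hs z (by simp)
      exact ⟨a, a, rfl, rfl, SimpleGraph.Walk.nil, by simp, by simp, by simp⟩
  | @cons z m c h p ih =>
      obtain ⟨a, rfl⟩ := hs z (by simp)
      obtain ⟨b, b', hm, hc', w₀, hsup, hed, hlen⟩ := ih (fun u hu => hs u (by simp [hu]))
      subst hm
      have hab : T₀.Adj a b := hadj a b h
      exact ⟨a, b', rfl, hc', SimpleGraph.Walk.cons hab w₀, by simp [hsup], by simp [hed],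
        by simp [hlen]⟩

lemma glue_cycle_transfer {f : ι₀ → ι₀ ⊕ K × ι₀} {x : ι₀ ⊕ K × ι₀} {a : ι₀}
    {c : (Glue T₀ att).Walk x x} (hc : c.IsCycle) {w₀ : T₀.Walk a a}
    (hsup : c.support = w₀.support.map f) (hed : c.edges = w₀.edges.map (Sym2.map f))
    (hlen : c.length = w₀.length) (hinj : Function.Injective f) : w₀.IsCycle := by
  rw [SimpleGraph.Walk.isCycle_def] at hc ⊢
  refine ⟨⟨List.Nodup.of_map _ (by rw [← hed]; exact hc.1.edges_nodup)⟩, ?_, ?_⟩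
  · intro hnil
    have h0 : w₀.length = 0 := by rw [hnil]; rfl
    have hc0 : c.length = 0 := by rw [hlen, h0]
    exact hc.2.1 (SimpleGraph.Walk.nil_iff_eq_nil.mp (SimpleGraph.Walk.length_eq_zero_iff.mp hc0))
  · have htail : c.support.tail = (w₀.support.tail).map f := by
      rw [hsup]
      cases w₀.support with
      | nil => rfl
      | cons hd tl => rfl
    exact List.Nodup.of_map f (by rw [← htail]; exact hc.2.2)

lemma glue_isAcyclic (hT : T₀.IsAcyclic) : (Glue T₀ att).IsAcyclic := by
  intro x c hc
  rcases Classical.em (∀ z ∈ c.support, gluePt z = gluePt x) with hall | hall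
  · -- all in one part; project and contradict acyclicity of T₀
    cases hx : gluePt (K := K) x with
    | none =>
        have hf : ∀ z ∈ c.support, ∃ a : ι₀, z = Sum.inl a := by
          intro z hz
          have := (hall z hz).trans hx
          cases z with
          | inl i => exact ⟨i, rfl⟩
          | inr p => simp [gluePt] at this
        obtain ⟨a, b, ha, hb, w₀, hsup, hed, hlen⟩ := glue_proj Sum.inl
          (fun a b h => by exact h) c hf
        have hab : a = b := Sum.inl_injective (ha.symm.trans hb)
        subst hab
        exact hT w₀ (glue_cycle_transfer hc hsup hed hlen Sum.inl_injective)
    | some k =>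
        have hf : ∀ z ∈ c.support, ∃ a : ι₀, z = Sum.inr (k, a) := by
          intro z hz
          have h2 := (hall z hz).trans hx
          cases z with
          | inl i => simp [gluePt] at h2
          | inr q =>
              have : q.1 = k := by simpa [gluePt] using h2
              exact ⟨q.2, by rw [← this]⟩
        obtain ⟨a, b, ha, hb, w₀, hsup, hed, hlen⟩ := glue_proj (fun a => Sum.inr (k, a))
          (fun a b h => by exact h.2) c hf
        have hab : a = b := by
          have := ha.symm.trans hb
          simpa using this
        subst hab
        exact hT w₀ (glue_cycle_transfer hc hsup hed hlen
          (fun a b h => by simpa using (Sum.inr_injective h : (k,a) = (k,b))))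
  · push_neg at hall
    obtain ⟨v, hv, hvne⟩ := hall
    have hvx : v ≠ x := fun h => hvne (h ▸ rfl)
    -- c passes through v which is in a different part from x
    have hvsup : v ∈ c.support := hv
    have hspec := c.take_spec hvsup
    have hedges : c.edges = (c.takeUntil v hvsup).edges ++ (c.dropUntil v hvsup).edges := by
      conv_lhs => rw [← hspec]
      exact SimpleGraph.Walk.edges_append _ _
    have hnodup : c.edges.Nodup := hc.isTrail.edges_nodup
    rw [hedges] at hnodup
    rw [List.nodup_append] at hnodup
    obtain ⟨-, -, hdisj⟩ := hnodup
    -- find the k : one of gluePt x, gluePt v is some k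
    rcases hk : gluePt (K := K) x with _ | k
    · -- x is a hat vertex, v must be a body vertex
      rcases hv' : gluePt (K := K) v with _ | k
      · exact hvne (hv'.trans hk.symm)
      · -- cross edge of k in both halves
        have h1 : s(Sum.inl (att k), Sum.inr (k, att k)) ∈ (c.takeUntil v hvsup).edges := by
          have := glue_cross_mem (c.takeUntil v hvsup).reverse k hv' (by rw [hk]; simp)
          rwa [SimpleGraph.Walk.edges_reverse, List.mem_reverse] at this
        have h2 : s(Sum.inl (att k), Sum.inr (k, att k)) ∈ (c.dropUntil v hvsup).edges :=
          glue_cross_mem _ k hv' (by rw [hk]; simp)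
        exact hdisj _ h1 _ h2 rfl
    · -- x is a body vertex in part k, v is in a different part
      have hvk : gluePt v ≠ some k := fun h => hvne (h.trans hk.symm)
      have h1 : s(Sum.inl (att k), Sum.inr (k, att k)) ∈ (c.takeUntil v hvsup).edges :=
        glue_cross_mem _ k hk hvk
      have h2 : s(Sum.inl (att k), Sum.inr (k, att k)) ∈ (c.dropUntil v hvsup).edges := by
        have := glue_cross_mem (c.dropUntil v hvsup).reverse k hk hvk
        rwa [SimpleGraph.Walk.edges_reverse, List.mem_reverse] at this
      exact hdisj _ h1 _ h2 rfl
end Glue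
namespace BW
open SimpleGraph
variable {V : Type*} (E : Finset (Finset V)) (S : Finset V)

/-- The graph on non-`S` vertices connecting neighbors. -/
def CG : SimpleGraph V where
  Adj w w' := w ≠ w' ∧ w ∉ S ∧ w' ∉ S ∧ Nbr E w w'
  symm := ⟨by
    intro w w' h
    obtain ⟨e, he, h1, h2⟩ := h.2.2.2
    exact ⟨h.1.symm, h.2.2.1, h.2.1, e, he, h2, h1⟩⟩
  loopless := ⟨fun w h => h.1 rfl⟩

noncomputable def U : Finset V := E.sup id

lemma mem_U {v : V} : v ∈ U E ↔ ∃ e ∈ E, v ∈ e := by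
  simp [U, Finset.mem_sup]

noncomputable def cls (w : V) : Finset V :=
  (U E).filter (fun w' => w' ∉ S ∧ (CG E S).Reachable w w')

lemma mem_cls {w w' : V} :
    w' ∈ cls E S w ↔ w' ∈ U E ∧ w' ∉ S ∧ (CG E S).Reachable w w' := by
  simp [cls]

lemma cls_eq {w w' : V} (h : (CG E S).Reachable w w') : cls E S w = cls E S w' := by
  ext z
  simp only [mem_cls]
  exact ⟨fun ⟨h1, h2, h3⟩ => ⟨h1, h2, h.symm.trans h3⟩, fun ⟨h1, h2, h3⟩ => ⟨h1, h2, h.trans h3⟩⟩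

noncomputable def comps : Finset (Finset V) :=
  ((U E).filter (fun w => w ∉ S)).image (cls E S)

lemma mem_comps {c : Finset V} :
    c ∈ comps E S ↔ ∃ w, w ∈ U E ∧ w ∉ S ∧ cls E S w = c := by
  simp [comps, Finset.mem_image]
  constructor
  · rintro ⟨w, ⟨h1, h2⟩, h3⟩; exact ⟨w, h1, h2, h3⟩
  · rintro ⟨w, h1, h2, h3⟩; exact ⟨w, ⟨h1, h2⟩, h3⟩

/-- The `S`-neighborhood of a component. -/
noncomputable def NSf (c : Finset V) : Finset V :=
  S.filter (fun v => ∃ e ∈ E, v ∈ e ∧ ∃ w ∈ e, w ∈ c)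

lemma mem_NSf {c : Finset V} {v : V} :
    v ∈ NSf E S c ↔ v ∈ S ∧ ∃ e ∈ E, v ∈ e ∧ ∃ w ∈ e, w ∈ c := by
  simp [NSf]

lemma CG_walk_support_not_S {a b : V} (p : (CG E S).Walk a b) (ha : a ∉ S) :
    ∀ z ∈ p.support, z ∉ S := by
  induction p with
  | nil => intro z hz; simp at hz; exact hz ▸ ha
  | @cons u m c h p ih =>
      intro z hz
      rcases (by simpa using hz : z = u ∨ z ∈ p.support) with rfl | hz'
      · exact ha
      · exact ih h.2.2.1 z hz'

lemma walk_support_getLast {W' : Type*} {G : SimpleGraph W'} {a b : W'} (p : G.Walk a b) :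
    p.support.getLast? = some b := by
  induction p with
  | nil => rfl
  | @cons u m c h p ih =>
      rw [SimpleGraph.Walk.support_cons, List.getLast?_cons, ih]
      rfl

lemma clique (hSvar : ∀ v ∈ S, ∃ e ∈ E, v ∈ e)
    (noSP : ¬ ∃ (x : V) (zs : List V) (y : V), IsSPath E S x zs y)
    {c : Finset V} (hc : c ∈ comps E S) {v v' : V} (hv : v ∈ NSf E S c)
    (hv' : v' ∈ NSf E S c) : Nbr E v v' := by
  obtain ⟨hvS, e, he, hve, w, hwe, hwc⟩ := mem_NSf E S |>.mp hv
  obtain ⟨hv'S, e', he', hv'e, w', hw'e, hw'c⟩ := mem_NSf E S |>.mp hv'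
  obtain ⟨w₀, hw₀U, hw₀S, rfl⟩ := mem_comps E S |>.mp hc
  obtain ⟨hwU, hwS, hww₀⟩ := mem_cls E S |>.mp hwc
  obtain ⟨hw'U, hw'S, hw'w₀⟩ := mem_cls E S |>.mp hw'c
  have hreach : (CG E S).Reachable w w' := hww₀.symm.trans hw'w₀
  obtain ⟨p⟩ := hreach
  set zs := p.support with hzs
  have hzsne : zs ≠ [] := SimpleGraph.Walk.support_ne_nil p
  have hzsS : ∀ z ∈ zs, z ∉ S := CG_walk_support_not_S E S p hwS
  have hchCG : List.Chain' ((CG E S).Adj) zs := SimpleGraph.Walk.isChain_adj_support p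
  have hchN : List.Chain' (Nbr E) zs := hchCG.imp (fun {a b} h => h.2.2.2)
  have hhead : zs.head? = some w := by
    rw [hzs, SimpleGraph.Walk.support_eq_cons]; rfl
  have hlast : zs.getLast? = some w' := walk_support_getLast p
  have hch : List.Chain' (Nbr E) (v :: zs ++ [v']) := by
    have h1 : List.Chain' (Nbr E) (zs ++ [v']) := by
      show List.IsChain _ _; rw [List.isChain_append]
      refine ⟨hchN, List.isChain_singleton _, ?_⟩
      intro x hx y hy
      rw [hlast] at hx
      obtain rfl := Option.some_inj.mp hx
      obtain rfl := Option.some_inj.mp (by simpa using hy : some v' = some y)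
      exact ⟨e', he', hw'e, hv'e⟩
    rw [List.cons_append]
    show List.IsChain _ _; rw [List.isChain_cons]
    refine ⟨?_, h1⟩
    intro y hy
    have hh : (zs ++ [v']).head? = some w := by
      rw [List.head?_append, hhead]
      rfl
    rw [hh] at hy
    obtain rfl := Option.some_inj.mp hy
    exact ⟨e, he, hve, hwe⟩
  exact shortcut hSvar noSP v v' hvS hv'S zs.length zs rfl hzsne hzsS hch

end BW
section Backward
open SimpleGraph
variable {V : Type*}

lemma backward {E : Finset (Finset V)} {S : Finset V}
    (hacyc : HGAcyclic E) (hSvar : ∀ v ∈ S, ∃ e ∈ E, v ∈ e)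
    (noSP : ¬ ∃ (x : V) (zs : List V) (y : V), IsSPath E S x zs y) :
    SConnex E S := by
  classical
  obtain ⟨ι₀, T₀, lab, hT₀, hmem, hcov, hri⟩ := hacyc
  have hA : ∀ v : V, SubConn T₀ {i | v ∈ lab i} := fun v => subConn_of_preconnected (hri v)
  have hne : Nonempty ι₀ := hT₀.isConnected.nonempty
  -- attach nodes via Helly
  have hattach : ∀ c : Finset V, ∃ i : ι₀, c ∈ BW.comps E S → ∀ v ∈ BW.NSf E S c, v ∈ lab i := by
    intro c
    by_cases hc : c ∈ BW.comps E S
    · rcases (BW.NSf E S c).eq_empty_or_nonempty with hemp | hnemp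
      · exact ⟨Classical.choice hne, fun _ v hv => absurd hv (by rw [hemp]; simp)⟩
      · obtain ⟨i, hi⟩ := helly hT₀ (BW.NSf E S c) (fun v => {i | v ∈ lab i}) hnemp
          (fun v _ => hA v)
          (fun v hv w hw => by
            obtain ⟨e, he, hv2, hw2⟩ := BW.clique E S hSvar noSP hc hv hw
            obtain ⟨i, hi⟩ := hcov e he
            exact ⟨i, by simp [hi, hv2], by simp [hi, hw2]⟩)
        exact ⟨i, fun _ => hi⟩
    · exact ⟨Classical.choice hne, fun h => absurd h hc⟩
  set att : Finset V → ι₀ := fun c => (hattach c).choose with hattdef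
  have hatt : ∀ c ∈ BW.comps E S, ∀ v ∈ BW.NSf E S c, v ∈ lab (att c) :=
    fun c hc => (hattach c).choose_spec hc
  set n := (BW.comps E S).card with hn
  set cmp : Fin n → Finset V := fun k => ((BW.comps E S).equivFin.symm k).1 with hcmp
  have hcmpmem : ∀ k, cmp k ∈ BW.comps E S := fun k => ((BW.comps E S).equivFin.symm k).2
  have hcmpsurj : ∀ c ∈ BW.comps E S, ∃ k, cmp k = c := by
    intro c hc
    exact ⟨(BW.comps E S).equivFin ⟨c, hc⟩, by simp [hcmp]⟩
  have hcmpinj : Function.Injective cmp := by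
    intro k k' h
    have := Subtype.ext (p := fun x => x ∈ BW.comps E S) h
    exact (BW.comps E S).equivFin.symm.injective this
  set atp : Fin n → ι₀ := fun k => att (cmp k) with hatp
  set GT := Glue T₀ atp with hGT
  set Lab : ι₀ ⊕ Fin n × ι₀ → Finset V := Sum.elim
    (fun i => (lab i).filter (fun w => w ∈ S))
    (fun p => (lab p.2).filter (fun w => w ∈ cmp p.1 ∨ w ∈ BW.NSf E S (cmp p.1))) with hLab
  have hLabinl : ∀ i (v : V), v ∈ Lab (Sum.inl i) ↔ v ∈ lab i ∧ v ∈ S := by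
    intro i v; simp [hLab]
  have hLabinr : ∀ k i (v : V), v ∈ Lab (Sum.inr (k, i)) ↔
      v ∈ lab i ∧ (v ∈ cmp k ∨ v ∈ BW.NSf E S (cmp k)) := by
    intro k i v; simp [hLab]
  -- cls members are not in S
  have hclsnotS : ∀ (w z : V), z ∈ BW.cls E S w → z ∉ S := by
    intro w z hz
    exact ((BW.mem_cls E S).mp hz).2.1
  have hcmpnotS : ∀ k (z : V), z ∈ cmp k → z ∉ S := by
    intro k z hz
    obtain ⟨w, _, _, hcls⟩ := (BW.mem_comps E S).mp (hcmpmem k)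
    exact hclsnotS w z (by rw [hcls]; exact hz)
  have hNSfS : ∀ c (z : V), z ∈ BW.NSf E S c → z ∈ S := fun c z hz => ((BW.mem_NSf E S).mp hz).1
  refine ⟨ι₀ ⊕ Fin n × ι₀, GT, Lab, ⟨glue_connected hT₀.isConnected, glue_isAcyclic hT₀.IsAcyclic⟩,
    ?_, ?_, ?_, Set.range Sum.inl, ?_, ?_⟩
  · -- every edge appears as a label
    intro e he
    by_cases heS : ∃ w ∈ e, w ∉ S
    · obtain ⟨w₀, hw₀e, hw₀S⟩ := heS
      have hw₀U : w₀ ∈ BW.U E := (BW.mem_U E).mpr ⟨e, he, hw₀e⟩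
      have hcmem : BW.cls E S w₀ ∈ BW.comps E S := (BW.mem_comps E S).mpr ⟨w₀, hw₀U, hw₀S, rfl⟩
      obtain ⟨k, hk⟩ := hcmpsurj _ hcmem
      obtain ⟨i₀, hi₀⟩ := hcov e he
      refine ⟨Sum.inr (k, i₀), ?_⟩
      rw [hLab]
      simp only [Sum.elim_inr]
      rw [hi₀, hk]
      apply Finset.filter_true_of_mem
      intro w hw
      by_cases hwS : w ∈ S
      · exact Or.inr ((BW.mem_NSf E S).mpr ⟨hwS, e, he, hw, w₀, hw₀e, (BW.mem_cls E S).mpr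
          ⟨hw₀U, hw₀S, SimpleGraph.Reachable.refl _⟩⟩)
      · refine Or.inl ((BW.mem_cls E S).mpr ⟨(BW.mem_U E).mpr ⟨e, he, hw⟩, hwS, ?_⟩)
        by_cases hww : w = w₀
        · exact hww ▸ SimpleGraph.Reachable.refl _
        · exact SimpleGraph.Adj.reachable ⟨fun h => hww h.symm, hw₀S, hwS, e, he, hw₀e, hw⟩
    · push_neg at heS
      obtain ⟨i₀, hi₀⟩ := hcov e he
      refine ⟨Sum.inl i₀, ?_⟩
      rw [hLab]
      simp only [Sum.elim_inl]
      rw [hi₀]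
      exact Finset.filter_true_of_mem heS
  · -- labels are subsets of edges
    rintro (i | ⟨k, i⟩)
    · exact ⟨lab i, hmem i, by rw [hLab]; simp only [Sum.elim_inl]; exact Finset.filter_subset _ _⟩
    · exact ⟨lab i, hmem i, by rw [hLab]; simp only [Sum.elim_inr]; exact Finset.filter_subset _ _⟩
  · -- running intersection
    intro v
    apply preconnected_of_subConn
    by_cases hvS : v ∈ S
    · -- S vertex
      have hXinl : ∀ i, Sum.inl i ∈ {x | v ∈ Lab x} ↔ v ∈ lab i := by
        intro i; simp [Set.mem_setOf_eq, hLabinl, hvS]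
      have hXinr : ∀ k i, Sum.inr (k, i) ∈ {x | v ∈ Lab x} ↔
          v ∈ lab i ∧ v ∈ BW.NSf E S (cmp k) := by
        intro k i
        simp only [Set.mem_setOf_eq, hLabinr]
        constructor
        · rintro ⟨h1, h2 | h2⟩
          · exact absurd hvS (hcmpnotS k v h2)
          · exact ⟨h1, h2⟩
        · rintro ⟨h1, h2⟩; exact ⟨h1, Or.inr h2⟩
      -- reduce any vertex to a hat vertex
      have hreduce : ∀ x ∈ {x | v ∈ Lab x}, ∃ (i : ι₀) (_ : v ∈ lab i)
          (w : GT.Walk x (Sum.inl i)), ∀ z ∈ w.support, z ∈ {x | v ∈ Lab x} := by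
        rintro (i | ⟨k, i⟩) hx
        · exact ⟨i, (hXinl i).mp hx, SimpleGraph.Walk.nil, by
            intro z hz; simpa using (by simpa using hz : z = Sum.inl i) ▸ hx⟩
        · obtain ⟨h1, h2⟩ := (hXinr k i).mp hx
          have hatpk : v ∈ lab (atp k) := hatt (cmp k) (hcmpmem k) v h2
          obtain ⟨w₀, hw₀⟩ := hA v i (by exact h1) (atp k) (by exact hatpk)
          set wb := w₀.map (bodyHom T₀ atp k) with hwb
          have hwbsup : ∀ z ∈ wb.support, z ∈ {x | v ∈ Lab x} := by
            intro z hz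
            rw [hwb, SimpleGraph.Walk.support_map] at hz
            obtain ⟨s, hs, rfl⟩ := List.mem_map.mp hz
            exact (hXinr k s).mpr ⟨hw₀ s hs, h2⟩
          have hcross : GT.Adj (Sum.inr (k, atp k)) (Sum.inl (atp k)) := (glue_cross_adj k).symm
          refine ⟨atp k, hatpk, wb.append (SimpleGraph.Walk.cons hcross SimpleGraph.Walk.nil), ?_⟩
          intro z hz
          rcases (SimpleGraph.Walk.mem_support_append_iff _ _).mp hz with h | h
          · exact hwbsup z h
          · rcases (by change z ∈ [Sum.inr (k, atp k), Sum.inl (atp k)] at h; simpa using h : z = Sum.inr (k, atp k) ∨ z = Sum.inl (atp k)) with rfl | rfl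
            · exact (hXinr k (atp k)).mpr ⟨hatpk, h2⟩
            · exact (hXinl (atp k)).mpr hatpk
      intro x hx y hy
      obtain ⟨ix, hix, wx, hwx⟩ := hreduce x hx
      obtain ⟨iy, hiy, wy, hwy⟩ := hreduce y hy
      obtain ⟨wm, hwm⟩ := hA v ix (by exact hix) iy (by exact hiy)
      set wmh := wm.map (hatHom T₀ atp) with hwmh
      have hwmhsup : ∀ z ∈ wmh.support, z ∈ {x | v ∈ Lab x} := by
        intro z hz
        rw [hwmh, SimpleGraph.Walk.support_map] at hz
        obtain ⟨s, hs, rfl⟩ := List.mem_map.mp hz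
        exact (hXinl s).mpr (hwm s hs)
      refine ⟨wx.append (wmh.append wy.reverse), ?_⟩
      intro z hz
      rcases (SimpleGraph.Walk.mem_support_append_iff _ _).mp hz with h | h
      · exact hwx z h
      rcases (SimpleGraph.Walk.mem_support_append_iff _ _).mp h with h' | h'
      · exact hwmhsup z h'
      · exact hwy z (by erw [SimpleGraph.Walk.support_reverse, List.mem_reverse] at h'; exact h')
    · -- non-S vertex
      have hXinl : ∀ i, Sum.inl i ∉ {x | v ∈ Lab x} := by
        intro i hx
        exact hvS ((hLabinl i v).mp hx).2
      have hXinr : ∀ k i, Sum.inr (k, i) ∈ {x | v ∈ Lab x} ↔ v ∈ lab i ∧ v ∈ cmp k := by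
        intro k i
        simp only [Set.mem_setOf_eq, hLabinr]
        constructor
        · rintro ⟨h1, h2 | h2⟩
          · exact ⟨h1, h2⟩
          · exact absurd (hNSfS _ v h2) hvS
        · rintro ⟨h1, h2⟩; exact ⟨h1, Or.inl h2⟩
      have hkuniq : ∀ k k', v ∈ cmp k → v ∈ cmp k' → k = k' := by
        intro k k' h1 h2
        obtain ⟨w, hwU, hwS, hcls⟩ := (BW.mem_comps E S).mp (hcmpmem k)
        obtain ⟨w', hw'U, hw'S, hcls'⟩ := (BW.mem_comps E S).mp (hcmpmem k')
        have hr : (BW.CG E S).Reachable w v := ((BW.mem_cls E S).mp (by rw [hcls]; exact h1)).2.2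
        have hr' : (BW.CG E S).Reachable w' v := ((BW.mem_cls E S).mp (by rw [hcls']; exact h2)).2.2
        apply hcmpinj
        rw [← hcls, ← hcls']
        exact BW.cls_eq E S (hr.trans hr'.symm)
      rintro x hx y hy
      obtain ⟨k, i, rfl⟩ : ∃ k i, x = Sum.inr (k, i) := by
        cases x with
        | inl i => exact absurd hx (hXinl i)
        | inr q => exact ⟨q.1, q.2, rfl⟩
      obtain ⟨k', j, rfl⟩ : ∃ k' j, y = Sum.inr (k', j) := by
        cases y with
        | inl i => exact absurd hy (hXinl i)
        | inr q => exact ⟨q.1, q.2, rfl⟩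
      obtain ⟨h1, h2⟩ := (hXinr k i).mp hx
      obtain ⟨h1', h2'⟩ := (hXinr k' j).mp hy
      obtain rfl : k = k' := hkuniq k k' h2 h2'
      obtain ⟨w₀, hw₀⟩ := hA v i (by exact h1) j (by exact h1')
      refine ⟨w₀.map (bodyHom T₀ atp k), ?_⟩
      intro z hz
      erw [SimpleGraph.Walk.support_map] at hz
      obtain ⟨s, hs, rfl⟩ := List.mem_map.mp hz
      exact (hXinr k s).mpr ⟨hw₀ s hs, h2⟩
  · -- Sub is preconnected
    apply preconnected_of_subConn
    rintro x ⟨i, rfl⟩ y ⟨j, rfl⟩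
    refine ⟨(walkOf hT₀.isConnected i j).map (hatHom T₀ atp), ?_⟩
    intro z hz
    erw [SimpleGraph.Walk.support_map] at hz
    obtain ⟨s, _, rfl⟩ := List.mem_map.mp hz
    exact ⟨s, rfl⟩
  · -- Sub covers exactly S
    intro v
    constructor
    · intro hv
      obtain ⟨e, he, hve⟩ := hSvar v hv
      obtain ⟨i₀, hi₀⟩ := hcov e he
      exact ⟨Sum.inl i₀, ⟨i₀, rfl⟩, (hLabinl i₀ v).mpr ⟨hi₀ ▸ hve, hv⟩⟩
    · rintro ⟨x, ⟨i, rfl⟩, hv⟩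
      exact ((hLabinl i v).mp hv).2
end Backward

/-- An acyclic hypergraph is `S`-connex iff it contains no
`S`-path.  In particular, if `a, b ∈ S` are non-neighbors and `c ∉ S` is a
neighbor of both, then the hypergraph is not `S`-connex. -/
theorem sconnex_iff_no_spath {V : Type*}
    (E : Finset (Finset V)) (S : Finset V)
    (hacyc : HGAcyclic E)
    (hSvar : ∀ v ∈ S, ∃ e ∈ E, v ∈ e) :
    (SConnex E S ↔ ¬ ∃ (x : V) (zs : List V) (y : V), IsSPath E S x zs y) ∧
    (∀ a b c : V, a ∈ S → b ∈ S → a ≠ b → ¬ Nbr E a b →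
        c ∉ S → Nbr E a c → Nbr E b c → ¬ SConnex E S) := by
  constructor
  · constructor
    · intro hsc hex
      obtain ⟨x, zs, y, hsp⟩ := hex
      exact forward hSvar hsc hsp
    · intro hno
      exact backward hacyc hSvar hno
  · intro a b c ha hb hab hnab hc hac hbc hsc
    refine forward hSvar hsc (x := a) (y := b) (zs := [c]) ⟨by simp, ha, hb, ?_, ?_, ?_, ?_⟩
    · intro z hz
      rw [List.mem_singleton] at hz
      exact hz ▸ hc
    · -- nodup
      have hacne : a ≠ c := fun h => hc (h ▸ ha)
      have hbcne : b ≠ c := fun h => hc (h ▸ hb)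
      simp [List.nodup_cons, hab, hacne, hbcne, Ne.symm hbcne]
    · -- chain
      show List.Chain' (Nbr E) [a, c, b]
      refine List.isChain_cons_cons.mpr ⟨hac, List.isChain_cons_cons.mpr ⟨?_, List.isChain_singleton _⟩⟩
      obtain ⟨e, he, h1, h2⟩ := hbc
      exact ⟨e, he, h2, h1⟩
    · -- chordless
      intro i j hij x hx y hy
      have hi : i < 3 := by
        by_contra h
        push_neg at h
        rw [List.getElem?_eq_none (by simpa using h)] at hx
        simp at hx
      have hj : j < 3 := by
        by_contra h
        push_neg at h
        rw [List.getElem?_eq_none (by simpa using h)] at hy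
        simp at hy
      obtain rfl : i = 0 := by omega
      obtain rfl : j = 2 := by omega
      have hxa : x = a := by simpa using hx.symm
      have hyb : y = b := by simpa using hy.symm
      rw [hxa, hyb]
      exact hnab
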